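/- Let S be a metric space, let γ ∈ (0,1), and let V : S → ℝ, r : S → ℝ, f : S → S satisfy the state-value Bellman equation V(s) = r(s) + γ·V(f(s)) for all s ∈ S. Suppose r is reverse Lipschitz with constant L_r > 0, i.e. |r(s₁) − r(s₂)| > L_r·dist(s₁, s₂) for all s₁ ≠ s₂; f is Lipschitz with constant L_p ≥ 0; V is Lipschitz with constant L_V ≥ 0; and γ·L_V·L_p < L_r. Then V is reverse Lipschitz with constant L_r − γ·L_V·L_p: for all s₁ ≠ s₂, |V(s₁) − V(s₂)| > (L_r − γ·L_V·L_p)·dist(s₁, s₂). -/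

import Mathlib

/-- Deterministic instance of Lemma 1 (after Rachelson & Lagoudakis): if the reward
is reverse Lipschitz with constant `L_r`, the dynamics are `L_p`-Lipschitz, the value
function is `L_V`-Lipschitz and `γ * L_V * L_p < L_r`, then the value function is
reverse Lipschitz with constant `L_r - γ * L_V * L_p`. -/
theorem stmt_4 {S : Type*} [MetricSpace S] (γ : ℝ) (hγ0 : 0 < γ) (hγ1 : γ < 1)
    (V r : S → ℝ) (f : S → S)
    (hbell : ∀ s, V s = r s + γ * V (f s))
    (Lr Lp LV : ℝ) (hLr : 0 < Lr) (hLp : 0 ≤ Lp) (hLV : 0 ≤ LV)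
    (hr : ∀ s₁ s₂ : S, s₁ ≠ s₂ → Lr * dist s₁ s₂ < |r s₁ - r s₂|)
    (hf : ∀ s₁ s₂ : S, dist (f s₁) (f s₂) ≤ Lp * dist s₁ s₂)
    (hVlip : ∀ s₁ s₂ : S, |V s₁ - V s₂| ≤ LV * dist s₁ s₂)
    (hgap : γ * LV * Lp < Lr) :
    ∀ s₁ s₂ : S, s₁ ≠ s₂ → (Lr - γ * LV * Lp) * dist s₁ s₂ < |V s₁ - V s₂| := by
  intro s₁ s₂ hne
  have h1 : |r s₁ - r s₂| - γ * |V (f s₁) - V (f s₂)| ≤ |V s₁ - V s₂| := by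
    have : r s₁ - r s₂ = (V s₁ - V s₂) - γ * (V (f s₁) - V (f s₂)) := by
      rw [hbell s₁, hbell s₂]; ring
    calc |r s₁ - r s₂| - γ * |V (f s₁) - V (f s₂)|
        = |(V s₁ - V s₂) - γ * (V (f s₁) - V (f s₂))| - |γ * (V (f s₁) - V (f s₂))| := by
          rw [← this, abs_mul, abs_of_pos hγ0]
      _ ≤ |V s₁ - V s₂| := by
          have := abs_sub_abs_le_abs_sub ((V s₁ - V s₂) - γ * (V (f s₁) - V (f s₂)))
            (-(γ * (V (f s₁) - V (f s₂))))
          simp at this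
          linarith [this, abs_neg (γ * (V (f s₁) - V (f s₂))), abs_mul γ (V (f s₁) - V (f s₂))]
  have h2 : γ * |V (f s₁) - V (f s₂)| ≤ γ * LV * Lp * dist s₁ s₂ := by
    have ha := hVlip (f s₁) (f s₂)
    have hb := hf s₁ s₂
    calc γ * |V (f s₁) - V (f s₂)| ≤ γ * (LV * dist (f s₁) (f s₂)) :=
          mul_le_mul_of_nonneg_left ha hγ0.le
      _ ≤ γ * (LV * (Lp * dist s₁ s₂)) := by
          apply mul_le_mul_of_nonneg_left _ hγ0.le
          exact mul_le_mul_of_nonneg_left hb hLV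
      _ = γ * LV * Lp * dist s₁ s₂ := by ring
  have h3 := hr s₁ s₂ hne
  nlinarith
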